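/- Let Ṽ_{1/2} be the normalised Wolbachia operator with η = 1/2. For every initial point s = (x₁⁽⁰⁾,x₂⁽⁰⁾,x₃⁽⁰⁾,u⁽⁰⁾) ∈ S^{3,1}, the sequence Ṽ_{1/2}^k(s) converges as k → ∞. If x₃⁽⁰⁾ = 0, then Ṽ_{1/2}^k(s) = Ṽ_{1/2}(s) for all k ≥ 1, so the limit is Ṽ_{1/2}(s) = ( x₁⁽⁰⁾/(2(x₁⁽⁰⁾+x₂⁽⁰⁾)), x₂⁽⁰⁾/(2(x₁⁽⁰⁾+x₂⁽⁰⁾)), 0, 1/2 ). Otherwise, writing (x₁⁽¹⁾,x₂⁽¹⁾,x₃⁽¹⁾,u⁽¹⁾) = Ṽ_{1/2}(s), the limit is ( (x₁⁽¹⁾+x₃⁽¹⁾)/(1+4x₃⁽¹⁾), (1+2(x₃⁽¹⁾−x₁⁽¹⁾))/(2(1+4x₃⁽¹⁾)), 0, 1/2 ). -/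

import Mathlib

/-- The normalised Wolbachia gonosomal operator with parameter `η`
(defined for points whose first three coordinates have positive sum). -/
noncomputable def nWolbOp (η : ℝ) (p : ℝ × ℝ × ℝ × ℝ) : ℝ × ℝ × ℝ × ℝ :=
  (η * (2 * p.1 + p.2.2.1) / (2 * (p.1 + p.2.1 + p.2.2.1)),
   (p.2.1 + (1 - η) * p.2.2.1) / (2 * (p.1 + p.2.1 + p.2.2.1)),
   η * p.2.2.1 / (2 * (p.1 + p.2.1 + p.2.2.1)),
   ((1 - η) * (2 * p.1 + p.2.2.1) + p.2.1) / (2 * (p.1 + p.2.1 + p.2.2.1)))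

/-- The set `S^{3,1}` of frequency distributions. -/
def S31 : Set (ℝ × ℝ × ℝ × ℝ) :=
  {p | 0 ≤ p.1 ∧ 0 ≤ p.2.1 ∧ 0 ≤ p.2.2.1 ∧ 0 ≤ p.2.2.2 ∧
       0 < p.1 + p.2.1 + p.2.2.1 ∧ 0 < p.2.2.2 ∧
       p.1 + p.2.1 + p.2.2.1 + p.2.2.2 = 1}

namespace WolbAux

/-- One-dimensional dynamics of the third coordinate. -/
noncomputable def hmap (c : ℝ) : ℝ := c / (2 + 4 * c)

lemma hmap_nonneg {c : ℝ} (hc : 0 ≤ c) : 0 ≤ hmap c :=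
  div_nonneg hc (by linarith)

lemma hmap_iter_nonneg (c : ℝ) (hc : 0 ≤ c) : ∀ k, 0 ≤ hmap^[k] c := by
  intro k
  induction k with
  | zero => simpa
  | succ n ih => rw [Function.iterate_succ_apply']; exact hmap_nonneg ih

lemma hmap_le {c : ℝ} (hc : 0 ≤ c) : hmap c ≤ c * (1 / 2) := by
  unfold hmap
  rw [div_le_iff₀ (by linarith)]
  nlinarith

lemma hmap_iter_le (c : ℝ) (hc : 0 ≤ c) : ∀ k, hmap^[k] c ≤ c * (1 / 2) ^ k := by
  intro k
  induction k with
  | zero => simp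
  | succ n ih =>
    rw [Function.iterate_succ_apply']
    calc hmap (hmap^[n] c) ≤ (hmap^[n] c) * (1 / 2) := hmap_le (hmap_iter_nonneg c hc n)
      _ ≤ (c * (1 / 2) ^ n) * (1 / 2) := by nlinarith
      _ = c * (1 / 2) ^ (n + 1) := by ring

lemma hmap_tendsto (c : ℝ) (hc : 0 ≤ c) :
    Filter.Tendsto (fun k => hmap^[k] c) Filter.atTop (nhds 0) := by
  have h1 : Filter.Tendsto (fun k : ℕ => c * (1 / 2 : ℝ) ^ k) Filter.atTop (nhds 0) := by
    have := tendsto_pow_atTop_nhds_zero_of_lt_one (by norm_num : (0:ℝ) ≤ 1 / 2)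
      (by norm_num : (1 / 2 : ℝ) < 1)
    simpa using this.const_mul c
  exact squeeze_zero (fun k => hmap_iter_nonneg c hc k) (fun k => hmap_iter_le c hc k) h1

/-- The invariant manifold reached after one iteration, parametrized by the
invariant `f = (a+c)/(1+4c)` and the third coordinate `c`. -/
noncomputable def embf (f c : ℝ) : ℝ × ℝ × ℝ × ℝ :=
  (f + (4 * f - 1) * c, 1 / 2 - (f + (4 * f - 1) * c), c, 1 / 2 - c)

lemma step (f c : ℝ) (hc : 0 ≤ c) :
    nWolbOp (1 / 2) (embf f c) = embf f (hmap c) := by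
  have hS : (2:ℝ) * ((f + (4 * f - 1) * c) + (1 / 2 - (f + (4 * f - 1) * c)) + c)
      = 1 + 2 * c := by ring
  have hd : (1:ℝ) + 2 * c ≠ 0 := by linarith
  have hd4 : (2:ℝ) + 4 * c ≠ 0 := by linarith
  simp only [nWolbOp, embf, hmap, Prod.mk.injEq, hS]
  refine ⟨?_, ?_, ?_, ?_⟩ <;> rw [div_eq_iff hd] <;> field_simp <;> ring

lemma iter (f c : ℝ) (hc : 0 ≤ c) :
    ∀ k, (nWolbOp (1 / 2))^[k] (embf f c) = embf f (hmap^[k] c) := by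
  intro k
  induction k with
  | zero => simp
  | succ n ih =>
    rw [Function.iterate_succ_apply', ih, Function.iterate_succ_apply']
    exact step f _ (hmap_iter_nonneg c hc n)

lemma embf_continuous (f : ℝ) : Continuous (fun c => embf f c) := by
  unfold embf; fun_prop

lemma firstStep (x₁ x₂ x₃ u A : ℝ) (hA : A = x₁ + x₂ + x₃) (h : A ≠ 0) :
    nWolbOp (1 / 2) (x₁, x₂, x₃, u) =
      ((2 * x₁ + x₃) / (4 * A), 1 / 2 - (2 * x₁ + x₃) / (4 * A),
       x₃ / (4 * A), 1 / 2 - x₃ / (4 * A)) := by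
  simp only [nWolbOp, Prod.mk.injEq]
  rw [← hA]
  refine ⟨?_, ?_, ?_, ?_⟩ <;> field_simp <;>
    (try subst hA) <;> (try ring) <;> tauto

lemma zeroStep (x₁ x₂ u B : ℝ) (hB : B = x₁ + x₂) (h : B ≠ 0) :
    nWolbOp (1 / 2) (x₁, x₂, 0, u) =
      (x₁ / (2 * B), x₂ / (2 * B), (0:ℝ), (1:ℝ) / 2) := by
  simp only [nWolbOp, Prod.mk.injEq, add_zero, mul_zero, zero_div]
  rw [← hB]
  refine ⟨?_, ?_, trivial, ?_⟩ <;> field_simp <;>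
    (try subst hB) <;> (try ring) <;> tauto

end WolbAux

open WolbAux in
theorem nWolbOp_half_limit (s : ℝ × ℝ × ℝ × ℝ) (hs : s ∈ S31) :
    (s.2.2.1 = 0 →
      (∀ k : ℕ, 1 ≤ k → (nWolbOp (1 / 2))^[k] s = nWolbOp (1 / 2) s) ∧
      nWolbOp (1 / 2) s =
        (s.1 / (2 * (s.1 + s.2.1)), s.2.1 / (2 * (s.1 + s.2.1)), (0 : ℝ), (1 : ℝ) / 2) ∧
      Filter.Tendsto (fun k => (nWolbOp (1 / 2))^[k] s) Filter.atTop
        (nhds (nWolbOp (1 / 2) s))) ∧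
    (s.2.2.1 ≠ 0 →
      Filter.Tendsto (fun k => (nWolbOp (1 / 2))^[k] s) Filter.atTop
        (nhds
          (((nWolbOp (1 / 2) s).1 + (nWolbOp (1 / 2) s).2.2.1) /
              (1 + 4 * (nWolbOp (1 / 2) s).2.2.1),
           (1 + 2 * ((nWolbOp (1 / 2) s).2.2.1 - (nWolbOp (1 / 2) s).1)) /
              (2 * (1 + 4 * (nWolbOp (1 / 2) s).2.2.1)),
           (0 : ℝ), (1 : ℝ) / 2))) := by
  obtain ⟨x₁, x₂, x₃, u⟩ := s
  obtain ⟨h1, h2, h3, h4, hα, hu, hsum⟩ := hs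
  simp only at h1 h2 h3 h4 hα hu hsum
  dsimp only
  have hαne : x₁ + x₂ + x₃ ≠ 0 := ne_of_gt hα
  -- data of the first iterate
  have hc₁ : (0:ℝ) ≤ x₃ / (4 * (x₁ + x₂ + x₃)) := div_nonneg h3 (by linarith)
  set c₁ : ℝ := x₃ / (4 * (x₁ + x₂ + x₃)) with hc1
  have h14 : (0:ℝ) < 1 + 4 * c₁ := by linarith
  set f : ℝ := ((2 * x₁ + x₃) / (4 * (x₁ + x₂ + x₃)) + c₁) / (1 + 4 * c₁) with hf
  have ha : (2 * x₁ + x₃) / (4 * (x₁ + x₂ + x₃)) = f + (4 * f - 1) * c₁ := by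
    rw [hf]
    field_simp
    ring
  have hVs : nWolbOp (1 / 2) (x₁, x₂, x₃, u) = embf f c₁ := by
    rw [firstStep x₁ x₂ x₃ u (x₁ + x₂ + x₃) rfl hαne]
    simp only [embf]; rw [← ha, hc1]
  have hiter : ∀ k : ℕ, (nWolbOp (1 / 2))^[k + 1] (x₁, x₂, x₃, u) = embf f (hmap^[k] c₁) := by
    intro k
    rw [Function.iterate_succ_apply, hVs, iter f c₁ hc₁ k]
  have hTend : Filter.Tendsto (fun k => (nWolbOp (1 / 2))^[k] (x₁, x₂, x₃, u)) Filter.atTop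
      (nhds (embf f 0)) := by
    rw [← Filter.tendsto_add_atTop_iff_nat 1]
    have := ((embf_continuous f).tendsto 0).comp (hmap_tendsto c₁ hc₁)
    exact this.congr fun k => (hiter k).symm
  constructor
  · intro h0
    have hc0 : c₁ = 0 := by rw [hc1, h0]; simp
    have hfix : ∀ k : ℕ, hmap^[k] (0:ℝ) = 0 :=
      fun k => Function.iterate_fixed (by simp [hmap]) k
    have hconst : ∀ k : ℕ, 1 ≤ k →
        (nWolbOp (1 / 2))^[k] (x₁, x₂, x₃, u) = nWolbOp (1 / 2) (x₁, x₂, x₃, u) := by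
      intro k hk
      obtain ⟨m, rfl⟩ : ∃ m, k = m + 1 := ⟨k - 1, by omega⟩
      rw [hiter m, hc0, hfix m, hVs, hc0]
    refine ⟨hconst, ?_, ?_⟩
    · have hβ : x₁ + x₂ ≠ 0 := by rw [h0] at hαne; simpa using hαne
      subst h0
      exact zeroStep x₁ x₂ u (x₁ + x₂) rfl hβ
    · refine Filter.Tendsto.congr' ?_ tendsto_const_nhds
      filter_upwards [Filter.eventually_ge_atTop 1] with k hk
      exact (hconst k hk).symm
  · intro _
    have hV1 : (nWolbOp (1 / 2) (x₁, x₂, x₃, u)).1 = f + (4 * f - 1) * c₁ := by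
      rw [hVs]; rfl
    have hV3 : (nWolbOp (1 / 2) (x₁, x₂, x₃, u)).2.2.1 = c₁ := by
      rw [hVs]; rfl
    rw [hV1, hV3]
    have e1 : (f + (4 * f - 1) * c₁ + c₁) / (1 + 4 * c₁) = f := by
      rw [div_eq_iff (ne_of_gt h14)]; ring
    have e2 : (1 + 2 * (c₁ - (f + (4 * f - 1) * c₁))) / (2 * (1 + 4 * c₁)) = 1 / 2 - f := by
      rw [div_eq_iff (by linarith : (2:ℝ) * (1 + 4 * c₁) ≠ 0)]; ring
    rw [e1, e2]
    have hembf0 : embf f 0 = (f, 1 / 2 - f, (0:ℝ), (1:ℝ) / 2) := by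
      norm_num [embf]
    rw [← hembf0]
    exact hTend
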